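/- Let P and Q be nonempty sets and let φ: 2^P → 2^Q be a bijection between their power sets. Then the following are equivalent: (1) there exists a bijection Ψ: P → Q such that φ(S) = Ψ(S) (the image of S) for all S ⊆ P; (2) φ is a homeomorphism with respect to the power-cofinite topologies; (3) φ is order-preserving (S ⊆ T if and only if φ(S) ⊆ φ(T)). -/

import Mathlib

/-- The power-cofinite topology on the power set `2^P`: the product topology on `{0,1}^P`
where each factor `{0,1}` carries the topology `{∅, {0}, {0,1}}`.  Its basic open sets are
`U_F = {T ⊆ P : T ∩ F = ∅}` for finite `F ⊆ P`. -/
def powerCofinite (P : Type*) : TopologicalSpace (Set P) :=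
  TopologicalSpace.generateFrom {U : Set (Set P) | ∃ F : Finset P, U = {T : Set P | ∀ a ∈ F, a ∉ T}}

/-- Every open set in the power-cofinite topology is downward closed. -/
lemma powerCofinite_open_downward {P : Type*} {U : Set (Set P)}
    (h : (powerCofinite P).IsOpen U) {S T : Set P} (hTS : T ⊆ S) (hS : S ∈ U) : T ∈ U := by
  have h' : TopologicalSpace.GenerateOpen
      {U : Set (Set P) | ∃ F : Finset P, U = {T : Set P | ∀ a ∈ F, a ∉ T}} U := h
  clear h
  induction h' with
  | basic V hV =>
    obtain ⟨F, rfl⟩ := hV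
    exact fun a ha haT => hS a ha (hTS haT)
  | univ => trivial
  | inter U V _ _ ihU ihV => exact ⟨ihU hS.1, ihV hS.2⟩
  | sUnion s _ ih =>
    obtain ⟨V, hV, hSV⟩ := hS
    exact ⟨V, hV, ih V hV hSV⟩

/-- Characterization of closures of points in the power-cofinite topology. -/
lemma powerCofinite_mem_closure {P : Type*} (S T : Set P) :
    S ∈ @closure _ (powerCofinite P) {T} ↔ T ⊆ S := by
  letI := powerCofinite P
  rw [mem_closure_iff]
  constructor
  · intro h
    by_contra hTS
    obtain ⟨t, htT, htS⟩ := Set.not_subset.mp hTS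
    have hopen : IsOpen {X : Set P | ∀ a ∈ ({t} : Finset P), a ∉ X} :=
      TopologicalSpace.isOpen_generateFrom_of_mem ⟨{t}, rfl⟩
    obtain ⟨X, hX1, hX2⟩ := h _ hopen (by simpa using htS)
    simp only [Set.mem_singleton_iff] at hX2
    subst hX2
    exact hX1 t (Finset.mem_singleton_self t) htT
  · intro hTS U hU hSU
    exact ⟨T, powerCofinite_open_downward hU hTS hSU, rfl⟩

/-- The map on power sets induced by a bijection is continuous. -/
lemma powerCofinite_continuous_image {P Q : Type*} [DecidableEq P] (e : P ≃ Q) :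
    @Continuous _ _ (powerCofinite P) (powerCofinite Q) (fun S : Set P => e '' S) := by
  letI := powerCofinite P
  letI := powerCofinite Q
  rw [powerCofinite, powerCofinite, continuous_generateFrom_iff]
  rintro U ⟨F, rfl⟩
  have : (fun S : Set P => e '' S) ⁻¹' {T : Set Q | ∀ a ∈ F, a ∉ T}
      = {T : Set P | ∀ a ∈ F.image e.symm, a ∉ T} := by
    ext T
    simp only [Set.mem_preimage, Set.mem_setOf_eq, Finset.mem_image]
    constructor
    · rintro h a ⟨b, hb, rfl⟩ hmem
      exact h b hb ⟨e.symm b, hmem, by simp⟩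
    · rintro h a ha ⟨p, hp, rfl⟩
      exact h (e.symm (e p)) ⟨e p, ha, rfl⟩ (by simpa using hp)
  rw [this]
  exact TopologicalSpace.isOpen_generateFrom_of_mem ⟨F.image e.symm, rfl⟩

theorem statement2 (P Q : Type*) [Nonempty P] [Nonempty Q]
    (φ : Set P → Set Q) (hφ : Function.Bijective φ) :
    List.TFAE [
      (∃ Ψ : P → Q, Function.Bijective Ψ ∧ ∀ S : Set P, φ S = Ψ '' S),
      (@IsHomeomorph (Set P) (Set Q) (powerCofinite P) (powerCofinite Q) φ),
      (∀ S T : Set P, S ⊆ T ↔ φ S ⊆ φ T)] := by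
  letI := powerCofinite P
  letI := powerCofinite Q
  tfae_have 1 → 2 := by
    rintro ⟨Ψ, hΨ, him⟩
    letI : DecidableEq P := Classical.decEq P
    letI : DecidableEq Q := Classical.decEq Q
    set e := Equiv.ofBijective Ψ hΨ with he
    have himage : φ = fun S => e '' S := by funext S; exact him S
    rw [isHomeomorph_iff_exists_inverse]
    refine ⟨himage ▸ powerCofinite_continuous_image e, fun T => e.symm '' T, ?_, ?_, ?_⟩
    · intro S
      rw [himage]
      simp [Set.image_image]
    · intro T
      rw [himage]
      simp [Set.image_image]
    · exact powerCofinite_continuous_image e.symm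
  tfae_have 2 → 3 := by
    intro h S T
    obtain ⟨h2, rfl⟩ := isHomeomorph_iff_exists_homeomorph.mp h
    have key : ∀ A B : Set P, (h2 B ∈ closure {h2 A}) ↔ (B ∈ closure {A}) := by
      intro A B
      rw [show ({h2 A} : Set (Set Q)) = h2 '' {A} from (Set.image_singleton).symm,
        ← h2.image_closure]
      exact ⟨fun hm => by
        obtain ⟨C, hC, hCB⟩ := hm
        rwa [h2.injective hCB] at hC,
        fun hm => ⟨B, hm, rfl⟩⟩
    rw [← powerCofinite_mem_closure T S, ← powerCofinite_mem_closure (h2 T) (h2 S), key]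
  tfae_have 3 → 1 := by
    intro h
    set e : Set P ≃o Set Q :=
      { toEquiv := Equiv.ofBijective φ hφ
        map_rel_iff' := fun {S T} => (h S T).symm } with hedef
    have hatom : ∀ p : P, ∃ q : Q, φ {p} = {q} := by
      intro p
      have : IsAtom (e {p}) := by
        rw [OrderIso.isAtom_iff]
        exact Set.isAtom_iff.mpr ⟨p, rfl⟩
      exact Set.isAtom_iff.mp this
    choose Ψ hΨ using hatom
    have hsurj : Function.Surjective Ψ := by
      intro q
      have : IsAtom (e.symm {q}) := by
        rw [OrderIso.isAtom_iff e.symm]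
        exact Set.isAtom_iff.mpr ⟨q, rfl⟩
      obtain ⟨p, hp⟩ := Set.isAtom_iff.mp this
      refine ⟨p, ?_⟩
      have : φ {p} = {q} := by
        have := congrArg e hp
        rw [OrderIso.apply_symm_apply] at this
        exact this.symm
      rw [hΨ p] at this
      exact Set.singleton_eq_singleton_iff.mp this
    have hinj : Function.Injective Ψ := by
      intro p p' hpp'
      have : φ {p} = φ {p'} := by rw [hΨ p, hΨ p', hpp']
      have := hφ.injective this
      exact Set.singleton_eq_singleton_iff.mp this
    refine ⟨Ψ, ⟨hinj, hsurj⟩, fun S => ?_⟩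
    ext q
    obtain ⟨p, rfl⟩ := hsurj q
    constructor
    · intro hq
      have : φ {p} ⊆ φ S := by rw [hΨ p]; simpa using hq
      have : ({p} : Set P) ⊆ S := (h {p} S).mpr this
      exact ⟨p, by simpa using this, rfl⟩
    · rintro ⟨p', hp', hpp'⟩
      have hp'S : ({p'} : Set P) ⊆ S := by simpa using hp'
      have : φ {p'} ⊆ φ S := (h {p'} S).mp hp'S
      rw [hΨ p', hpp'] at this
      exact this rfl
  tfae_finish
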